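/- Every (non-extended) open graph with a gflow admits a focused gflow: if (G, I, O, λ) with λ constantly {X,Y} has a gflow, then it has a gflow g such that Odd(g(u)) ∩ Oᶜ = {u} for all u ∈ Oᶜ. -/

import Mathlib

open scoped symmDiff

inductive Pauli | X | Y | Z
deriving DecidableEq

inductive MPlane | XY | XZ | YZ
deriving DecidableEq

/-- The set of Pauli operators defining a measurement plane. -/
def MPlane.paulis : MPlane → Finset Pauli
  | .XY => {.X, .Y}
  | .XZ => {.X, .Z}
  | .YZ => {.Y, .Z}

variable {V : Type} [Fintype V] [DecidableEq V]

/-- Odd neighbourhood: vertices with an odd number of neighbours in `A`. -/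
def oddNbhd (G : SimpleGraph V) [DecidableRel G.Adj] (A : Finset V) : Finset V :=
  Finset.univ.filter fun w => Odd (A.filter (G.Adj w)).card

/-- `f` is extensive w.r.t. the strict order `r`. -/
def IsExtensive (O : Finset V) (r : V → V → Prop) (f : V → Finset V) : Prop :=
  ∀ u ∉ O, ∀ v ∈ f u, v ≠ u → r u v

/-- gflow of an extended open graph `(G, I, O, lam)`. -/
def IsGflow (G : SimpleGraph V) [DecidableRel G.Adj]
    (I O : Finset V) (lam : V → MPlane) (g : V → Finset V) : Prop :=
  (∀ u ∉ O, g u ⊆ Iᶜ) ∧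
  (∃ r : V → V → Prop, IsStrictOrder V r ∧
    IsExtensive O r (fun u => g u ∪ oddNbhd G (g u))) ∧
  ∀ u ∉ O,
    (lam u = .XY → u ∈ oddNbhd G (g u) ∧ u ∉ g u) ∧
    (lam u = .XZ → u ∈ g u ∧ u ∈ oddNbhd G (g u)) ∧
    (lam u = .YZ → u ∈ g u ∧ u ∉ oddNbhd G (g u))

/-- σ-normal forms for gflows. -/
def IsNF (σ : Pauli) (G : SimpleGraph V) [DecidableRel G.Adj]
    (O : Finset V) (g : V → Finset V) : Prop :=
  match σ with
  | .X => ∀ u ∉ O, oddNbhd G (g u) ⊆ insert u O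
  | .Y => ∀ u ∉ O, (g u ∆ oddNbhd G (g u)) ⊆ insert u O
  | .Z => ∀ u ∉ O, g u ⊆ insert u O

instance symmDiffComm : Std.Commutative (α := Finset V) (· ∆ ·) := ⟨symmDiff_comm⟩
instance symmDiffAssoc : Std.Associative (α := Finset V) (· ∆ ·) := ⟨symmDiff_assoc⟩

def foldSD {ι : Type} [DecidableEq ι] (T : Finset ι) (f : ι → Finset V) : Finset V :=
  T.fold (· ∆ ·) ∅ f

theorem mem_foldSD {ι : Type} [DecidableEq ι] {T : Finset ι} {f : ι → Finset V} {a : V} :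
    a ∈ foldSD T f ↔ Odd (T.filter (fun i => a ∈ f i)).card := by
  classical
  induction T using Finset.induction_on with
  | empty => simp [foldSD]
  | @insert i s hx ih =>
    rw [foldSD, Finset.fold_insert hx, Finset.mem_symmDiff, Finset.filter_insert]
    by_cases hai : a ∈ f i
    · rw [if_pos hai, Finset.card_insert_of_notMem (by simp [hx]), Nat.odd_add_one]
      have := ih
      rw [foldSD] at this
      simp [hai, this]
    · rw [if_neg hai]
      have := ih
      rw [foldSD] at this
      simp [hai, this]

theorem not_mem_foldSD {ι : Type} [DecidableEq ι] {T : Finset ι} {f : ι → Finset V} {a : V}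
    (h : ∀ i ∈ T, a ∉ f i) : a ∉ foldSD T f := by
  rw [mem_foldSD]
  have : T.filter (fun i => a ∈ f i) = ∅ := Finset.filter_eq_empty_iff.mpr h
  simp [this]

theorem exists_of_mem_foldSD {ι : Type} [DecidableEq ι] {T : Finset ι} {f : ι → Finset V} {a : V}
    (h : a ∈ foldSD T f) : ∃ i ∈ T, a ∈ f i := by
  by_contra hc
  push_neg at hc
  exact not_mem_foldSD hc h

theorem foldSD_subset {ι : Type} [DecidableEq ι] {T : Finset ι} {f : ι → Finset V} {A : Finset V}
    (h : ∀ i ∈ T, f i ⊆ A) : foldSD T f ⊆ A := by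
  intro a ha
  obtain ⟨i, hi, hai⟩ := exists_of_mem_foldSD ha
  exact h i hi hai

theorem foldSD_inter {ι : Type} [DecidableEq ι] (T : Finset ι) (f : ι → Finset V) (A : Finset V) :
    foldSD T f ∩ A = foldSD T (fun i => f i ∩ A) := by
  ext a
  rw [Finset.mem_inter, mem_foldSD, mem_foldSD]
  by_cases haA : a ∈ A <;> simp [haA]

theorem oddNbhd_symmDiff (G : SimpleGraph V) [DecidableRel G.Adj] (A B : Finset V) :
    oddNbhd G (A ∆ B) = oddNbhd G A ∆ oddNbhd G B := by
  ext w
  simp only [oddNbhd, Finset.mem_symmDiff, Finset.mem_filter, Finset.mem_univ, true_and,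
    Finset.mem_sdiff]
  have hfil : (A ∆ B).filter (G.Adj w) = A.filter (G.Adj w) ∆ B.filter (G.Adj w) := by
    ext v
    simp [Finset.mem_symmDiff, Finset.mem_filter]
    tauto
  rw [hfil]
  generalize A.filter (G.Adj w) = s at *
  generalize B.filter (G.Adj w) = t at *
  have h1 : (s \ t).card + (s ∩ t).card = s.card := Finset.card_sdiff_add_card_inter s t
  have h2 : (t \ s).card + (t ∩ s).card = t.card := Finset.card_sdiff_add_card_inter t s
  have h3 : (s ∆ t).card = (s \ t).card + (t \ s).card := by
    rw [symmDiff_def, Finset.sup_eq_union]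
    exact Finset.card_union_of_disjoint disjoint_sdiff_sdiff
  have h4 : (s ∩ t).card = (t ∩ s).card := by rw [Finset.inter_comm]
  simp only [Nat.odd_iff] at *
  omega

theorem oddNbhd_foldSD {ι : Type} [DecidableEq ι] (G : SimpleGraph V) [DecidableRel G.Adj]
    (T : Finset ι) (f : ι → Finset V) :
    oddNbhd G (foldSD T f) = foldSD T (fun i => oddNbhd G (f i)) := by
  classical
  induction T using Finset.induction_on with
  | empty => simp [foldSD, oddNbhd]
  | @insert i s hx ih =>
    rw [foldSD, foldSD, Finset.fold_insert hx, Finset.fold_insert hx, ← foldSD, ← foldSD,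
      oddNbhd_symmDiff, ih]

theorem foldSD_singleton (S : Finset V) : foldSD S (fun v => ({v} : Finset V)) = S := by
  ext a
  rw [mem_foldSD]
  have : S.filter (fun i => a ∈ ({i} : Finset V)) = S.filter (fun i => i = a) := by
    apply Finset.filter_congr; intro i _; simp [eq_comm]
  rw [this, Finset.filter_eq']
  by_cases haS : a ∈ S <;> simp [haS]

theorem symmDiff_inter_distrib (A B C : Finset V) :
    (A ∆ B) ∩ C = (A ∩ C) ∆ (B ∩ C) := by
  ext a
  simp [Finset.mem_symmDiff]
  tauto

def focusAux (G : SimpleGraph V) [DecidableRel G.Adj] (O : Finset V)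
    (g : V → Finset V) (ρ : V → ℕ) (u : V) : Finset V :=
  if u ∈ O then ∅ else
    g u ∆ foldSD ((oddNbhd G (g u) ∩ Oᶜ).erase u)
      (fun v => if h : ρ v < ρ u then focusAux G O g ρ v else ∅)
termination_by ρ u

theorem focusAux_props (G : SimpleGraph V) [DecidableRel G.Adj] (I O : Finset V)
    (g : V → Finset V) (r : V → V → Prop) (hso : IsStrictOrder V r) (ρ : V → ℕ)
    (hρ : ∀ u v, r u v → ρ v < ρ u)
    (hsub : ∀ u ∉ O, g u ⊆ Iᶜ)
    (hext : IsExtensive O r (fun u => g u ∪ oddNbhd G (g u)))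
    (hXY : ∀ u ∉ O, u ∈ oddNbhd G (g u) ∧ u ∉ g u) :
    ∀ u ∉ O,
      focusAux G O g ρ u ⊆ Iᶜ ∧
      (∀ w ∈ focusAux G O g ρ u ∪ oddNbhd G (focusAux G O g ρ u), w ≠ u → r u w) ∧
      oddNbhd G (focusAux G O g ρ u) ∩ Oᶜ = {u} ∧
      u ∉ focusAux G O g ρ u := by
  suffices H : ∀ n : ℕ, ∀ u ∉ O, ρ u < n →
      focusAux G O g ρ u ⊆ Iᶜ ∧
      (∀ w ∈ focusAux G O g ρ u ∪ oddNbhd G (focusAux G O g ρ u), w ≠ u → r u w) ∧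
      oddNbhd G (focusAux G O g ρ u) ∩ Oᶜ = {u} ∧
      u ∉ focusAux G O g ρ u by
    exact fun u hu => H (ρ u + 1) u hu (Nat.lt_succ_self _)
  intro n
  induction n with
  | zero => exact fun u _ h => absurd h (Nat.not_lt_zero _)
  | succ n ih =>
    intro u hu hlt
    set S : Finset V := (oddNbhd G (g u) ∩ Oᶜ).erase u with hSdef
    have hSmem : ∀ v ∈ S, v ∉ O ∧ v ≠ u ∧ r u v := by
      intro v hv
      rw [hSdef, Finset.mem_erase, Finset.mem_inter, Finset.mem_compl] at hv
      exact ⟨hv.2.2, hv.1, hext u hu v (Finset.mem_union_right _ hv.2.1) hv.1⟩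
    have hρS : ∀ v ∈ S, ρ v < ρ u := fun v hv => hρ u v (hSmem v hv).2.2
    set F := focusAux G O g ρ with hFdef
    have hunf : F u = g u ∆ foldSD S (fun v => F v) := by
      rw [hFdef, focusAux, if_neg hu]
      congr 1
      apply Finset.fold_congr
      intro v hv
      rw [dif_pos (hρS v hv)]
    -- IH applies to each v ∈ S
    have hIH : ∀ v ∈ S, F v ⊆ Iᶜ ∧
        (∀ w ∈ F v ∪ oddNbhd G (F v), w ≠ v → r v w) ∧
        oddNbhd G (F v) ∩ Oᶜ = {v} ∧ v ∉ F v := by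
      intro v hv
      exact ih v (hSmem v hv).1 (by have := hρS v hv; omega)
    have hOddFu : oddNbhd G (F u) = oddNbhd G (g u) ∆ foldSD S (fun v => oddNbhd G (F v)) := by
      rw [hunf, oddNbhd_symmDiff, oddNbhd_foldSD]
    have huS : u ∉ S := fun h => (hSmem u h).2.1 rfl
    have huOgu : u ∈ oddNbhd G (g u) := (hXY u hu).1
    -- (c) first
    have hc : oddNbhd G (F u) ∩ Oᶜ = {u} := by
      rw [hOddFu]
      rw [symmDiff_inter_distrib, foldSD_inter]
      have h1 : foldSD S (fun v => oddNbhd G (F v) ∩ Oᶜ) = S := by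
        conv_rhs => rw [← foldSD_singleton S]
        unfold foldSD
        exact Finset.fold_congr (fun v hv => (hIH v hv).2.2.1)
      have h2 : oddNbhd G (g u) ∩ Oᶜ = {u} ∆ S := by
        have hd : Disjoint ({u} : Finset V) S := Finset.disjoint_singleton_left.mpr huS
        rw [hd.symmDiff_eq_sup, Finset.sup_eq_union, ← Finset.insert_eq, hSdef,
          Finset.insert_erase (Finset.mem_inter.mpr ⟨huOgu, Finset.mem_compl.mpr hu⟩)]
      rw [h1, h2, symmDiff_assoc, symmDiff_self, symmDiff_bot]
    -- (a)
    have ha : F u ⊆ Iᶜ := by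
      rw [hunf]
      intro a haa
      rcases Finset.mem_symmDiff.mp haa with ⟨h1, _⟩ | ⟨h1, _⟩
      · exact hsub u hu h1
      · exact foldSD_subset (fun v hv => (hIH v hv).1) h1
    -- (b)
    have hb : ∀ w ∈ F u ∪ oddNbhd G (F u), w ≠ u → r u w := by
      intro w hw hwu
      have : w ∈ (g u ∪ oddNbhd G (g u)) ∨ ∃ v ∈ S, w ∈ F v ∪ oddNbhd G (F v) := by
        rcases Finset.mem_union.mp hw with h1 | h1
        · rw [hunf] at h1
          rcases Finset.mem_symmDiff.mp h1 with ⟨h2, _⟩ | ⟨h2, _⟩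
          · exact Or.inl (Finset.mem_union_left _ h2)
          · obtain ⟨v, hv, hwv⟩ := exists_of_mem_foldSD h2
            exact Or.inr ⟨v, hv, Finset.mem_union_left _ hwv⟩
        · rw [hOddFu] at h1
          rcases Finset.mem_symmDiff.mp h1 with ⟨h2, _⟩ | ⟨h2, _⟩
          · exact Or.inl (Finset.mem_union_right _ h2)
          · obtain ⟨v, hv, hwv⟩ := exists_of_mem_foldSD h2
            exact Or.inr ⟨v, hv, Finset.mem_union_right _ hwv⟩
      rcases this with h1 | ⟨v, hv, hwv⟩
      · exact hext u hu w h1 hwu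
      · rcases eq_or_ne w v with rfl | hne
        · exact (hSmem w hv).2.2
        · exact hso.toIsTrans.trans _ _ _ (hSmem v hv).2.2 ((hIH v hv).2.1 w hwv hne)
    -- (d)
    have hd : u ∉ F u := by
      rw [hunf]
      intro hmem
      rcases Finset.mem_symmDiff.mp hmem with ⟨h1, _⟩ | ⟨h1, _⟩
      · exact (hXY u hu).2 h1
      · obtain ⟨v, hv, huv⟩ := exists_of_mem_foldSD h1
        have hru : r v u := (hIH v hv).2.1 u (Finset.mem_union_left _ huv)
          (Ne.symm (hSmem v hv).2.1)
        exact hso.toIrrefl.irrefl u (hso.toIsTrans.trans _ _ _ (hSmem v hv).2.2 hru)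
    exact ⟨ha, hb, hc, hd⟩

/-- Every open graph (all measurements in the {X,Y}-plane) with a gflow admits a
focused gflow. -/
theorem exists_focused_gflow (G : SimpleGraph V) [DecidableRel G.Adj]
    (I O : Finset V)
    (h : ∃ g : V → Finset V, IsGflow G I O (fun _ => .XY) g) :
    ∃ g : V → Finset V, IsGflow G I O (fun _ => .XY) g ∧
      ∀ u ∉ O, oddNbhd G (g u) ∩ Oᶜ = {u} := by
  classical
  obtain ⟨g, h1, ⟨r, hso, hext⟩, h3⟩ := h
  set ρ : V → ℕ := fun u => (Finset.univ.filter (fun v => r u v)).card with hρdef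
  have hρ : ∀ u v, r u v → ρ v < ρ u := by
    intro u v huv
    apply Finset.card_lt_card
    have hsub : Finset.univ.filter (fun w => r v w) ⊆ Finset.univ.filter (fun w => r u w) := by
      intro w hw
      simp only [Finset.mem_filter, Finset.mem_univ, true_and] at *
      exact hso.toIsTrans.trans _ _ _ huv hw
    refine (Finset.ssubset_iff_of_subset hsub).mpr ⟨v, ?_, ?_⟩
    · simp [huv]
    · simp [hso.toIrrefl.irrefl v]
  have hXY : ∀ u ∉ O, u ∈ oddNbhd G (g u) ∧ u ∉ g u := fun u hu => (h3 u hu).1 rfl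
  have props := focusAux_props G I O g r hso ρ hρ h1 hext hXY
  refine ⟨focusAux G O g ρ, ⟨fun u hu => (props u hu).1,
    ⟨r, hso, fun u hu v hv hne => (props u hu).2.1 v hv hne⟩, ?_⟩,
    fun u hu => (props u hu).2.2.1⟩
  intro u hu
  refine ⟨fun _ => ⟨?_, (props u hu).2.2.2⟩,
    fun hc => absurd hc (show (MPlane.XY : MPlane) ≠ MPlane.XZ by decide),
    fun hc => absurd hc (show (MPlane.XY : MPlane) ≠ MPlane.YZ by decide)⟩
  have hmem : u ∈ oddNbhd G (focusAux G O g ρ u) ∩ Oᶜ :=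
    (props u hu).2.2.1 ▸ Finset.mem_singleton_self u
  exact (Finset.mem_inter.mp hmem).1
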